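/- Maximum principle for the graph ∞-Laplacian: let G be a finite weighted graph with vertex set X, nonnegative symmetric edge weights w(x,y), and a nonempty boundary set O ⊂ X such that every vertex of X \ O is connected to O by a path of vertices with positive edge weights. Define the graph ∞-Laplacian L u(x) = max_{y∈X} w(x,y)(u(y) − u(x)) + min_{y∈X} w(x,y)(u(y) − u(x)). If u, v : X → ℝ satisfy L u(x) ≥ 0 ≥ L v(x) for all x ∈ X \ O, then max_{x∈X} (u(x) − v(x)) = max_{x∈O} (u(x) − v(x)). -/

import Mathlib

open Finset

/-- The graph ∞-Laplacian on a finite vertex set. -/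
noncomputable def graphInfLap {V : Type*} [Fintype V] [Nonempty V]
    (w : V → V → ℝ) (u : V → ℝ) (x : V) : ℝ :=
  Finset.univ.sup' Finset.univ_nonempty (fun y => w x y * (u y - u x)) +
  Finset.univ.inf' Finset.univ_nonempty (fun y => w x y * (u y - u x))

/-- The graph is connected to the boundary set `O`: from every vertex outside `O` there
is a path of consecutively adjacent vertices (positive weights) ending in `O`. -/
def graphConnectedTo {V : Type*} (w : V → V → ℝ) (O : Finset V) : Prop :=
  ∀ x : V, x ∉ O → ∃ y ∈ O, Relation.ReflTransGen (fun a b => 0 < w a b) x y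

/-- Maximum principle for the graph ∞-Laplacian. -/
theorem graphInfLap_maximum_principle {V : Type*} [Fintype V] [Nonempty V]
    (w : V → V → ℝ) (hw : ∀ x y, 0 ≤ w x y) (hsym : ∀ x y, w x y = w y x)
    (O : Finset V) (hO : O.Nonempty) (hconn : graphConnectedTo w O)
    (u v : V → ℝ)
    (hu : ∀ x : V, x ∉ O → 0 ≤ graphInfLap w u x)
    (hv : ∀ x : V, x ∉ O → graphInfLap w v x ≤ 0) :
    Finset.univ.sup' Finset.univ_nonempty (fun x => u x - v x) =
      O.sup' hO (fun x => u x - v x) := by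
  classical
  set M : ℝ := Finset.univ.sup' Finset.univ_nonempty (fun x => u x - v x) with hM
  have hle : ∀ x : V, u x - v x ≤ M := fun x =>
    Finset.le_sup' (fun x => u x - v x) (Finset.mem_univ x)
  -- the set of maximizers
  set T : Finset V := Finset.univ.filter (fun x => u x - v x = M) with hT
  have hTne : T.Nonempty := by
    obtain ⟨x, -, hx⟩ := Finset.exists_mem_eq_sup' Finset.univ_nonempty
      (fun x => u x - v x)
    exact ⟨x, by simp [hT, hx.symm]; exact hM.symm⟩
  set c : ℝ := T.sup' hTne u with hc
  obtain ⟨x₀, hx₀T, hx₀c⟩ := Finset.exists_mem_eq_sup' hTne u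
  have hx₀M : u x₀ - v x₀ = M := (Finset.mem_filter.mp hx₀T).2
  -- key closure property
  have key : ∀ x : V, u x - v x = M → u x = c → x ∉ O →
      ∀ y : V, 0 < w x y → (u y - v y = M ∧ u y = c) := by
    intro x hxM hxc hxO
    set F : V → ℝ := fun y => w x y * (u y - u x) with hF
    set G : V → ℝ := fun y => w x y * (v y - v x) with hG
    have hFG : ∀ y, F y ≤ G y := by
      intro y
      have h1 : u y - v y ≤ u x - v x := hxM ▸ hle y
      have h2 : u y - u x ≤ v y - v x := by linarith
      exact mul_le_mul_of_nonneg_left h2 (hw x y)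
    have hmaxle : Finset.univ.sup' Finset.univ_nonempty F ≤
        Finset.univ.sup' Finset.univ_nonempty G :=
      Finset.sup'_le _ _ fun y _ => le_trans (hFG y) (Finset.le_sup' G (Finset.mem_univ y))
    have hminle : Finset.univ.inf' Finset.univ_nonempty F ≤
        Finset.univ.inf' Finset.univ_nonempty G :=
      Finset.le_inf' _ _ fun y _ => le_trans (Finset.inf'_le F (Finset.mem_univ y)) (hFG y)
    have huF : 0 ≤ Finset.univ.sup' Finset.univ_nonempty F +
        Finset.univ.inf' Finset.univ_nonempty F := hu x hxO
    have hvG : Finset.univ.sup' Finset.univ_nonempty G +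
        Finset.univ.inf' Finset.univ_nonempty G ≤ 0 := hv x hxO
    have hmaxeq : Finset.univ.sup' Finset.univ_nonempty F =
        Finset.univ.sup' Finset.univ_nonempty G := by linarith
    have hmineq : Finset.univ.inf' Finset.univ_nonempty F =
        Finset.univ.inf' Finset.univ_nonempty G := by linarith
    have hsum0 : Finset.univ.sup' Finset.univ_nonempty F +
        Finset.univ.inf' Finset.univ_nonempty F = 0 := by linarith
    have hFx : F x = 0 := by simp [hF]
    have hminF0 : Finset.univ.inf' Finset.univ_nonempty F ≤ 0 :=
      hFx ▸ Finset.inf'_le F (Finset.mem_univ x)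
    have hmaxF0 : 0 ≤ Finset.univ.sup' Finset.univ_nonempty F := by linarith
    have hmaxF : Finset.univ.sup' Finset.univ_nonempty F = 0 := by
      by_contra h
      have hpos : 0 < Finset.univ.sup' Finset.univ_nonempty F :=
        lt_of_le_of_ne hmaxF0 (Ne.symm h)
      obtain ⟨y₀, -, hy₀⟩ := Finset.exists_mem_eq_sup' Finset.univ_nonempty F
      have hFy₀ : 0 < F y₀ := hy₀ ▸ hpos
      have hwy₀ : 0 < w x y₀ := by
        rcases lt_or_eq_of_le (hw x y₀) with h | h
        · exact h
        · exfalso; simp [hF, ← h] at hFy₀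
      have hGle : G y₀ ≤ F y₀ := by
        calc G y₀ ≤ Finset.univ.sup' Finset.univ_nonempty G :=
              Finset.le_sup' G (Finset.mem_univ y₀)
          _ = Finset.univ.sup' Finset.univ_nonempty F := hmaxeq.symm
          _ = F y₀ := hy₀
      have hFGeq : F y₀ = G y₀ := le_antisymm (hFG y₀) hGle
      have huveq : u y₀ - u x = v y₀ - v x :=
        mul_left_cancel₀ (ne_of_gt hwy₀) hFGeq
      have hy₀M : u y₀ - v y₀ = M := by linarith
      have hy₀T : y₀ ∈ T := by simp [hT, hy₀M]
      have hy₀c : u y₀ ≤ c := Finset.le_sup' u hy₀T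
      have : u x < u y₀ := by
        have := (mul_pos_iff.mp hFy₀)
        rcases this with ⟨-, h2⟩ | ⟨h1, -⟩
        · linarith
        · linarith [hwy₀]
      linarith [hxc ▸ this, hy₀c]
    have hminF : Finset.univ.inf' Finset.univ_nonempty F = 0 := by linarith
    have hmaxG : Finset.univ.sup' Finset.univ_nonempty G = 0 := hmaxeq ▸ hmaxF
    have hminG : Finset.univ.inf' Finset.univ_nonempty G = 0 := hmineq ▸ hminF
    intro y hwy
    have hFy : F y = 0 := le_antisymm (hmaxF ▸ Finset.le_sup' F (Finset.mem_univ y))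
      (hminF ▸ Finset.inf'_le F (Finset.mem_univ y))
    have hGy : G y = 0 := le_antisymm (hmaxG ▸ Finset.le_sup' G (Finset.mem_univ y))
      (hminG ▸ Finset.inf'_le G (Finset.mem_univ y))
    have huy : u y = u x := by
      have := mul_eq_zero.mp hFy
      rcases this with h | h
      · exact absurd h (ne_of_gt hwy)
      · linarith
    have hvy : v y = v x := by
      have := mul_eq_zero.mp hGy
      rcases this with h | h
      · exact absurd h (ne_of_gt hwy)
      · linarith
    constructor
    · rw [huy, hvy]; exact hxM
    · rw [huy]; exact hxc
  -- there is a maximizer in O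
  have hexO : ∃ z ∈ O, u z - v z = M := by
    by_cases hx₀O : x₀ ∈ O
    · exact ⟨x₀, hx₀O, hx₀M⟩
    · obtain ⟨y, hyO, hpath⟩ := hconn x₀ hx₀O
      have main : ∀ a : V, Relation.ReflTransGen (fun a b => 0 < w a b) a y →
          u a - v a = M → u a = c → ∃ z ∈ O, u z - v z = M := by
        intro a hpath
        induction hpath using Relation.ReflTransGen.head_induction_on with
        | refl => intro haM _; exact ⟨y, hyO, haM⟩
        | head hab _ ih =>
          rename_i a' b' _
          intro haM hac
          by_cases haO : a' ∈ O
          · exact ⟨a', haO, haM⟩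
          · obtain ⟨hbM, hbc⟩ := key a' haM hac haO b' hab
            exact ih hbM hbc
      exact main x₀ hpath hx₀M hx₀c.symm
  obtain ⟨z, hzO, hzM⟩ := hexO
  apply le_antisymm
  · exact hzM ▸ Finset.le_sup' (fun x => u x - v x) hzO
  · exact Finset.sup'_le _ _ fun y _ => hle y
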